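/- Let f : ℤ → ℂ and let n ≥ 1. Assume the Toeplitz matrices T_n(f) and T_{n+1}(f) are invertible. Then U⁺_n − U⁺_{n+1} = Ũ⁻_n · U⁻_{n+1}, where U⁺_m is the first component of T_m(f)^{−1} f⁺ (with f⁺ of length m), U⁻_m is its last component, and Ũ⁻_m is the last component of (T_m(f)ᵀ)^{−1} f̃⁺. -/
import Mathlib


open scoped BigOperators
open Matrix

/-- The `m × m` Toeplitz matrix `T_m(f)` with `(i,j)` entry `f(i-j)`. -/
noncomputable def Tmat (f : ℤ → ℂ) (m : ℕ) : Matrix (Fin m) (Fin m) ℂ :=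
  Matrix.of fun i j : Fin m => f (((i : ℕ) : ℤ) - ((j : ℕ) : ℤ))

/-- The vector `f⁺ = (f(1), …, f(m))`. -/
def fplus (f : ℤ → ℂ) (m : ℕ) : Fin m → ℂ := fun i => f (((i : ℕ) : ℤ) + 1)

/-- The vector `f̃⁺ = (f(-1), …, f(-m))`. -/
def ftplus (f : ℤ → ℂ) (m : ℕ) : Fin m → ℂ := fun i => f (-(((i : ℕ) : ℤ) + 1))

/-- Identity (3.10) of Tracy–Widom: `U⁺_n - U⁺_{n+1} = Ũ⁻_n U⁻_{n+1}`, where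
`U⁺_m` and `U⁻_m` are the first and last components of `T_m(f)⁻¹ f⁺`, and
`Ũ⁻_m` is the last component of `(T_m(f)ᵀ)⁻¹ f̃⁺`. -/
theorem toeplitz_UU_identity (f : ℤ → ℂ) (n : ℕ) (hn : 1 ≤ n)
    (h1 : IsUnit (Tmat f n)) (h2 : IsUnit (Tmat f (n + 1))) :
    ((Tmat f n)⁻¹ *ᵥ fplus f n) ⟨0, by omega⟩ -
        ((Tmat f (n + 1))⁻¹ *ᵥ fplus f (n + 1)) ⟨0, by omega⟩ =
      (((Tmat f n)ᵀ)⁻¹ *ᵥ ftplus f n) ⟨n - 1, by omega⟩ *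
        ((Tmat f (n + 1))⁻¹ *ᵥ fplus f (n + 1)) ⟨n, by omega⟩ := by
  set A := Tmat f n with hA
  set B := Tmat f (n + 1) with hB
  have hdA : IsUnit A.det := (Matrix.isUnit_iff_isUnit_det A).mp h1
  have hdB : IsUnit B.det := (Matrix.isUnit_iff_isUnit_det B).mp h2
  have hdAT : IsUnit Aᵀ.det := by rw [Matrix.det_transpose]; exact hdA
  set x : Fin (n + 1) → ℂ := B⁻¹ *ᵥ fplus f (n + 1) with hxdef
  have hx : B *ᵥ x = fplus f (n + 1) := by
    rw [hxdef, Matrix.mulVec_mulVec, Matrix.mul_nonsing_inv _ hdB, Matrix.one_mulVec]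
  set g : Fin n → ℂ := fun i => f (((i : ℕ) : ℤ) - (n : ℤ)) with hg
  set w : Fin n → ℂ := A⁻¹ *ᵥ g with hwdef
  have hw : A *ᵥ w = g := by
    rw [hwdef, Matrix.mulVec_mulVec, Matrix.mul_nonsing_inv _ hdA, Matrix.one_mulVec]
  -- step 1: the first n equations of the (n+1)-system
  have step1 : A *ᵥ (fun j => x j.castSucc) = fplus f n - x (Fin.last n) • g := by
    funext i
    have hxi := congrFun hx i.castSucc
    simp only [Matrix.mulVec, dotProduct] at hxi ⊢
    rw [Fin.sum_univ_castSucc] at hxi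
    have hBA : ∀ j : Fin n, B i.castSucc j.castSucc = A i j := by
      intro j
      simp [hA, hB, Tmat]
    have hBg : B i.castSucc (Fin.last n) = g i := by
      simp [hB, Tmat, hg]
    have hfp : fplus f (n + 1) i.castSucc = fplus f n i := by
      simp [fplus]
    rw [hfp] at hxi
    simp only [hBA, hBg] at hxi
    simp only [Pi.sub_apply, Pi.smul_apply, smul_eq_mul]
    linear_combination hxi
  -- step 2: solve for the truncated vector
  have step2 : (fun j => x j.castSucc) = A⁻¹ *ᵥ fplus f n - x (Fin.last n) • w := by
    have := congrArg (fun v => A⁻¹ *ᵥ v) step1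
    simp only [Matrix.mulVec_mulVec, Matrix.nonsing_inv_mul _ hdA, Matrix.one_mulVec,
      Matrix.mulVec_sub, Matrix.mulVec_smul] at this
    rw [this, hwdef]
  -- step 3: the persymmetry identity for the transpose system
  set vt : Fin n → ℂ := fun k => w k.rev with hvt
  have step3 : Aᵀ *ᵥ vt = ftplus f n := by
    funext i
    have hrev := congrFun hw i.rev
    simp only [Matrix.mulVec, dotProduct, Matrix.transpose_apply, hvt] at hrev ⊢
    have hsum : ∑ j : Fin n, A j i * w j.rev = ∑ j : Fin n, A j.rev i * w j := by
      rw [← Equiv.sum_comp (Fin.revPerm) (fun j => A j i * w j.rev)]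
      simp [Fin.revPerm]
    rw [hsum]
    have hAA : ∀ j : Fin n, A j.rev i = A i.rev j := by
      intro j
      have hi := i.is_lt
      have hj := j.is_lt
      simp only [hA, Tmat, Matrix.of_apply]
      congr 1
      have : (j.rev : ℕ) = n - 1 - (j : ℕ) := by
        have := Fin.val_rev j; omega
      have h2' : (i.rev : ℕ) = n - 1 - (i : ℕ) := by
        have := Fin.val_rev i; omega
      rw [this, h2']
      push_cast [Nat.cast_sub (by omega : (i:ℕ) ≤ n - 1), Nat.cast_sub (by omega : (j:ℕ) ≤ n - 1),
        Nat.cast_sub (by omega : 1 ≤ n)]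
      ring
    simp only [hAA]
    rw [hrev]
    simp only [hg, ftplus]
    congr 1
    have hvr := Fin.val_rev i
    have hi := i.is_lt
    omega
  have step3' : (Aᵀ)⁻¹ *ᵥ ftplus f n = vt := by
    rw [← step3, Matrix.mulVec_mulVec, Matrix.nonsing_inv_mul _ hdAT, Matrix.one_mulVec]
  -- combine
  have key := congrFun step2 ⟨0, by omega⟩
  have hcast : (⟨0, by omega⟩ : Fin n).castSucc = (⟨0, by omega⟩ : Fin (n + 1)) := rfl
  rw [hcast] at key
  have hlast : (⟨n, by omega⟩ : Fin (n + 1)) = Fin.last n := rfl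
  have hrev0 : (⟨n - 1, by omega⟩ : Fin n).rev = ⟨0, by omega⟩ := by
    apply Fin.ext
    have := Fin.val_rev (⟨n - 1, by omega⟩ : Fin n)
    simpa using by omega
  rw [step3', hvt]
  simp only [Pi.sub_apply, Pi.smul_apply, smul_eq_mul] at key
  rw [hlast]
  beta_reduce
  rw [hrev0]
  linear_combination -key
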